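/- Let m > 1 and k be such that gcd(2^k - 1, 2^m - 1) = 1. Then the map f : F_{2^m} → F_{2^m} given by f(t) = t^(2^k) + t^(2^k - 1) is 2-to-1 on its image; in particular its image has exactly 2^(m-1) elements. -/
import Mathlib

theorem stmt_8 {m k : ℕ} (hm : 1 < m) (F : Type*) [Field F] [Fintype F]
    [Algebra (ZMod 2) F] (hcard : Fintype.card F = 2 ^ m)
    (hgcd : Nat.gcd (2 ^ k - 1) (2 ^ m - 1) = 1)
    (f : F → F) (hf : ∀ t, f t = t ^ (2 ^ k) + t ^ (2 ^ k - 1)) :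
    (∀ b ∈ Set.range f, (f ⁻¹' {b}).ncard = 2) ∧ (Set.range f).ncard = 2 ^ (m - 1) := by
  classical
  haveI : CharP F 2 :=
    charP_of_injective_algebraMap (algebraMap (ZMod 2) F).injective 2
  have hk : k ≠ 0 := by
    rintro rfl
    simp at hgcd
    have h4 : 4 ≤ 2 ^ m := by
      calc (4 : ℕ) = 2 ^ 2 := rfl
        _ ≤ 2 ^ m := Nat.pow_le_pow_right (by norm_num) hm
    omega
  have hq2 : 2 ≤ 2 ^ k := by
    calc (2 : ℕ) = 2 ^ 1 := rfl
      _ ≤ 2 ^ k := Nat.pow_le_pow_right (by norm_num) (Nat.one_le_iff_ne_zero.mpr hk)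
  have hqe : 2 ^ k - 1 + 1 = 2 ^ k := by omega
  have hqne : 2 ^ k - 1 ≠ 0 := by omega
  have htwo : (2 : F) = 0 := by exact_mod_cast CharP.cast_eq_zero F 2
  have hoo : (1 : F) + 1 = 0 := by rw [← htwo]; norm_num
  have hchar2 : ∀ x : F, x + x = 0 := fun x => CharTwo.add_self_eq_zero x
  -- freshman's dream for exponent 2^k
  haveI : Fact (Nat.Prime 2) := ⟨Nat.prime_two⟩
  have hfrob : ∀ x y : F, (x + y) ^ (2 ^ k) = x ^ (2 ^ k) + y ^ (2 ^ k) := fun x y =>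
    add_pow_char_pow x y 2 k
  have hf0 : f 0 = 0 := by
    rw [hf, zero_pow (by omega), zero_pow hqne, add_zero]
  -- bijectivity of x ↦ x^(2^k - 1) on nonzero elements
  have hcop : (Nat.card Fˣ).Coprime (2 ^ k - 1) := by
    rw [Nat.card_eq_fintype_card, Fintype.card_units, hcard]
    exact Nat.Coprime.symm hgcd
  have hpow : ∀ c : F, c ≠ 0 → ∃ s : F, s ≠ 0 ∧ s ^ (2 ^ k - 1) = c ∧
      ∀ d : F, d ≠ 0 → d ^ (2 ^ k - 1) = c → d = s := by
    intro c hc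
    set e := powCoprime hcop with he
    refine ⟨((e.symm (Units.mk0 c hc) : Fˣ) : F), Units.ne_zero _, ?_, ?_⟩
    · have h1 : e (e.symm (Units.mk0 c hc)) = Units.mk0 c hc :=
        e.apply_symm_apply _
      rw [he, powCoprime_apply] at h1
      calc ((e.symm (Units.mk0 c hc) : Fˣ) : F) ^ (2 ^ k - 1)
          = (((e.symm (Units.mk0 c hc)) ^ (2 ^ k - 1) : Fˣ) : F) := by
            rw [Units.val_pow_eq_pow_val]
        _ = c := by rw [h1]; rfl
    · intro d hd hdc
      have h2 : e (Units.mk0 d hd) = Units.mk0 c hc := by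
        apply Units.ext
        rw [he, powCoprime_apply]
        simpa [Units.val_pow_eq_pow_val] using hdc
      have h3 : Units.mk0 d hd = e.symm (Units.mk0 c hc) := by
        rw [← h2, Equiv.symm_apply_apply]
      exact congrArg Units.val h3
  -- key computation: for t ≠ 0, f t = b ↔ b * (t⁻¹)^(2^k) = t⁻¹ + 1
  have hsub : ∀ t : F, t ≠ 0 → t⁻¹ * t ^ (2 ^ k) = t ^ (2 ^ k - 1) := by
    intro t ht
    have h1 : t ^ (2 ^ k) = t * t ^ (2 ^ k - 1) := by
      rw [← pow_succ', hqe]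
    rw [h1, ← mul_assoc, inv_mul_cancel₀ ht, one_mul]
  have hiff : ∀ b t : F, t ≠ 0 →
      (f t = b ↔ b * (t⁻¹) ^ (2 ^ k) = t⁻¹ + 1) := by
    intro b t ht
    rw [hf, inv_pow, mul_inv_eq_iff_eq_mul₀ (pow_ne_zero _ ht)]
    have hexp : (t⁻¹ + 1) * t ^ (2 ^ k) = t ^ (2 ^ k) + t ^ (2 ^ k - 1) := by
      rw [add_mul, one_mul, hsub t ht, add_comm]
    rw [hexp]
    exact eq_comm
  -- key lemma: every fiber over the range is a pair
  have key : ∀ b : F, b ∈ Set.range f → ∃ x y : F, x ≠ y ∧ f ⁻¹' {b} = {x, y} := by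
    rintro b ⟨a, rfl⟩
    by_cases hb : f a = 0
    · refine ⟨0, 1, zero_ne_one, ?_⟩
      ext t
      simp only [Set.mem_preimage, Set.mem_singleton_iff, Set.mem_insert_iff, hb]
      constructor
      · intro h
        rw [hf] at h
        have hfac : t ^ (2 ^ k - 1) * (t + 1) = 0 := by
          rw [mul_add, mul_one, ← pow_succ, hqe, h]
        rcases mul_eq_zero.mp hfac with h1 | h1
        · exact Or.inl (pow_eq_zero_iff hqne |>.mp h1)
        · right
          have : t = -1 := eq_neg_of_add_eq_zero_left h1
          rwa [CharTwo.neg_eq] at this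
      · rintro (rfl | rfl)
        · exact hf0
        · rw [hf, one_pow, one_pow, hoo]
    · have ha0 : a ≠ 0 := by rintro rfl; exact hb hf0
      have hfa : f a * (a⁻¹) ^ (2 ^ k) = a⁻¹ + 1 := (hiff (f a) a ha0).mp rfl
      obtain ⟨s0, hs0ne, hs0eq, hs0uniq⟩ := hpow (f a)⁻¹ (inv_ne_zero hb)
      have hbs0 : f a * s0 ^ (2 ^ k) = s0 := by
        rw [← hqe, pow_succ, hs0eq, ← mul_assoc, mul_inv_cancel₀ hb, one_mul]
      have hne : a⁻¹ + s0 ≠ 0 := by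
        intro h
        have hs0a : s0 = a⁻¹ := by
          have : s0 = -a⁻¹ := eq_neg_of_add_eq_zero_right h
          rwa [CharTwo.neg_eq] at this
        rw [hs0a] at hbs0
        rw [hbs0] at hfa
        exact one_ne_zero (left_eq_add.mp hfa)
      set y := (a⁻¹ + s0)⁻¹ with hy
      have hyne : y ≠ 0 := inv_ne_zero hne
      have hyinv : y⁻¹ = a⁻¹ + s0 := by rw [hy, inv_inv]
      refine ⟨a, y, ?_, ?_⟩
      · intro h
        have h2 : a⁻¹ = y⁻¹ := congrArg (·⁻¹) h
        rw [hyinv] at h2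
        exact hs0ne (left_eq_add.mp h2)
      · ext t
        simp only [Set.mem_preimage, Set.mem_singleton_iff, Set.mem_insert_iff]
        constructor
        · intro h
          have ht0 : t ≠ 0 := by rintro rfl; rw [hf0] at h; exact hb h.symm
          have ht : f a * (t⁻¹) ^ (2 ^ k) = t⁻¹ + 1 := (hiff (f a) t ht0).mp h
          set d := t⁻¹ + a⁻¹ with hd
          have hdq : f a * d ^ (2 ^ k) = d := by
            rw [hd, hfrob, mul_add, ht, hfa]
            have : t⁻¹ + 1 + (a⁻¹ + 1) = t⁻¹ + a⁻¹ + (1 + 1) := by ring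
            rw [this, hoo, add_zero]
          by_cases hd0 : d = 0
          · left
            have : t⁻¹ = a⁻¹ := by
              have h2 : t⁻¹ = -a⁻¹ := eq_neg_of_add_eq_zero_left (hd ▸ hd0)
              rwa [CharTwo.neg_eq] at h2
            have := congrArg (·⁻¹) this
            simpa [inv_inv] using this
          · right
            have hds : d = s0 := by
              apply hs0uniq d hd0
              have h3 : f a * d ^ (2 ^ k - 1) * d = 1 * d := by
                rw [mul_assoc, ← pow_succ, hqe, hdq, one_mul]
              have h4 : f a * d ^ (2 ^ k - 1) = 1 := mul_right_cancel₀ hd0 h3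
              exact (inv_eq_of_mul_eq_one_right h4).symm
            have htinv : t⁻¹ = a⁻¹ + s0 := by
              have : t⁻¹ + a⁻¹ = s0 := hd ▸ hds
              have h5 : t⁻¹ + a⁻¹ + a⁻¹ = s0 + a⁻¹ := by rw [this]
              rw [add_assoc, hchar2, add_zero] at h5
              rw [h5, add_comm]
            have := congrArg (·⁻¹) htinv
            simpa [inv_inv, ← hy] using this
        · rintro (rfl | rfl)
          · rfl
          · apply (hiff (f a) y hyne).mpr
            rw [hyinv, hfrob, mul_add, hfa, hbs0]
            ring
  -- counting
  set R : Finset F := Finset.univ.image f with hR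
  have hrange : Set.range f = ↑R := by ext x; simp [hR]
  have part1 : ∀ b ∈ Set.range f, (f ⁻¹' {b}).ncard = 2 := by
    intro b hb
    obtain ⟨x, y, hxy, hset⟩ := key b hb
    rw [hset, Set.ncard_pair hxy]
  refine ⟨part1, ?_⟩
  have hcardsum : Fintype.card F = ∑ b ∈ R, (Finset.univ.filter (fun t => f t = b)).card := by
    rw [← Finset.card_univ]
    exact Finset.card_eq_sum_card_fiberwise
      (fun x _ => Finset.mem_image_of_mem f (Finset.mem_univ x))
  have hfilter : ∀ b ∈ R, (Finset.univ.filter (fun t => f t = b)).card = 2 := by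
    intro b hb
    have hb' : b ∈ Set.range f := by rw [hrange]; exact_mod_cast hb
    obtain ⟨x, y, hxy, hset⟩ := key b hb'
    have hfeq : Finset.univ.filter (fun t => f t = b) = {x, y} := by
      ext t
      simp only [Finset.mem_filter, Finset.mem_univ, true_and, Finset.mem_insert,
        Finset.mem_singleton]
      have := Set.ext_iff.mp hset t
      simpa [Set.mem_preimage] using this
    rw [hfeq, Finset.card_pair hxy]
  have hsum2 : 2 ^ m = 2 * R.card := by
    rw [← hcard, hcardsum, Finset.sum_congr rfl hfilter, Finset.sum_const,
      smul_eq_mul, mul_comm]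
  have hhalf : 2 ^ m = 2 * 2 ^ (m - 1) := by
    have hm1 : m - 1 + 1 = m := by omega
    conv_lhs => rw [← hm1]
    rw [pow_succ, mul_comm]
  rw [hrange, Set.ncard_coe_finset]
  omega
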